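/- Let δ > 0 and suppose at some round t the UCB indices satisfy: optimal arm index I_{i*}(t) ≥ μ_{i*} (lower-bounded by its true mean, on the concentration event) and the strategic arm's clean-index upper bound is I_i^{clean}(t) ≤ μ_i + 2·sqrt(2 log(K_i²/η²)/K_i). If the strategic arm's corrupted index exceeds the optimal arm's index, then the cumulative manipulation ρ_i spent so far satisfies ρ_i/K_i ≥ δ - 2·sqrt(2 log(K_i²/η²)/K_i), i.e., ρ_i ≥ K_i·δ - 2·sqrt(2 K_i log(K_i²/η²)), where δ = μ_{i*} - μ_i. -/

import Mathlib

/-- core index-comparison inequality. If the optimal arm's index is at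
least its true mean `μ⋆`, the strategic arm's clean empirical mean satisfies
`μ̂ ≤ μᵢ + √(2 log(K²/η²)/K)`, and the corrupted index
`μ̂ + ρ/K + √(2 log(K²/η²)/K)` exceeds the optimal arm's index, then
`ρ/K ≥ δ - 2 √(2 log(K²/η²)/K)` and `ρ ≥ K δ - 2 √(2 K log(K²/η²))`,
where `δ = μ⋆ - μᵢ`. -/
theorem stmt_17 (μstar μi η ρ Istar μhat : ℝ) (K : ℕ) (hK : 1 ≤ K)
    (hη : 0 < η) (hδ : 0 < μstar - μi) (hρ : 0 ≤ ρ)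
    (hIstar : μstar ≤ Istar)
    (hclean : μhat ≤ μi + Real.sqrt (2 * Real.log ((K : ℝ) ^ 2 / η ^ 2) / K))
    (hexceed : Istar < μhat + ρ / K + Real.sqrt (2 * Real.log ((K : ℝ) ^ 2 / η ^ 2) / K)) :
    ρ / K ≥ (μstar - μi) - 2 * Real.sqrt (2 * Real.log ((K : ℝ) ^ 2 / η ^ 2) / K) ∧
    ρ ≥ K * (μstar - μi) - 2 * Real.sqrt (2 * K * Real.log ((K : ℝ) ^ 2 / η ^ 2)) := by
  have hKpos : (0:ℝ) < K := by exact_mod_cast hK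
  set L := Real.log ((K : ℝ) ^ 2 / η ^ 2) with hL
  have h1 : ρ / K ≥ (μstar - μi) - 2 * Real.sqrt (2 * L / K) := by
    nlinarith [lt_of_le_of_lt hIstar hexceed, hclean]
  refine ⟨h1, ?_⟩
  have h2 : ρ ≥ K * (μstar - μi) - K * (2 * Real.sqrt (2 * L / K)) := by
    have h := mul_le_mul_of_nonneg_left h1 hKpos.le
    have hdiv : (K:ℝ) * (ρ / K) = ρ := by field_simp
    nlinarith
  rcases le_or_gt L 0 with h | h
  · have e1 : Real.sqrt (2 * L / K) = 0 :=
      Real.sqrt_eq_zero_of_nonpos (div_nonpos_of_nonpos_of_nonneg (by linarith) hKpos.le)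
    have e2 : Real.sqrt (2 * (K:ℝ) * L) = 0 :=
      Real.sqrt_eq_zero_of_nonpos (by nlinarith)
    rw [e2]; rw [e1] at h2; linarith
  · have hsq : (K : ℝ) * Real.sqrt (2 * L / K) = Real.sqrt (2 * K * L) := by
      rw [show 2 * (K:ℝ) * L = (K:ℝ)^2 * (2 * L / K) by field_simp,
        Real.sqrt_mul (by positivity), Real.sqrt_sq hKpos.le]
    linarith [hsq]
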